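/- arXiv:1309.5740 — 3 statements merged into one kernel-verified Lean document; each statement's English description precedes it below -/
import Mathlib

section
/- Let Z₁ and Z₂ be independent standard (mean 0, variance 1) Gaussian random variables and let t ∈ ℝ. Then exp(t Z₁ Z₂) is integrable if and only if |t| < 1, and in that case E[exp(t Z₁ Z₂)] = (1 − t²)^{−1/2}. -/
open MeasureTheory ProbabilityTheory Real ENNReal

lemma aux_pdf_mul_exp (s y : ℝ) :
    gaussianPDFReal 0 1 y * Real.exp (s * y)
      = Real.exp (s ^ 2 / 2) * gaussianPDFReal s 1 y := by
  simp only [gaussianPDFReal, NNReal.coe_one, mul_one, sub_zero]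
  rw [mul_assoc, ← Real.exp_add]
  have h : -y ^ 2 / 2 + s * y = s ^ 2 / 2 + -(y - s) ^ 2 / 2 := by ring
  rw [h, Real.exp_add]
  ring

lemma aux_lintegral_exp_mul_gaussian (s : ℝ) :
    ∫⁻ y, ENNReal.ofReal (Real.exp (s * y)) ∂(gaussianReal 0 1)
      = ENNReal.ofReal (Real.exp (s ^ 2 / 2)) := by
  rw [gaussianReal_of_var_ne_zero 0 one_ne_zero,
    lintegral_withDensity_eq_lintegral_mul _ (measurable_gaussianPDF 0 1) (by fun_prop)]
  simp only [Pi.mul_apply, gaussianPDF]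
  calc ∫⁻ y, ENNReal.ofReal (gaussianPDFReal 0 1 y) * ENNReal.ofReal (Real.exp (s * y))
      = ∫⁻ y, ENNReal.ofReal (Real.exp (s ^ 2 / 2)) * ENNReal.ofReal (gaussianPDFReal s 1 y) := by
        refine lintegral_congr fun y => ?_
        rw [← ENNReal.ofReal_mul (gaussianPDFReal_nonneg 0 1 y), aux_pdf_mul_exp,
          ENNReal.ofReal_mul (Real.exp_pos _).le]
    _ = ENNReal.ofReal (Real.exp (s ^ 2 / 2)) := by
        rw [lintegral_const_mul _ (measurable_gaussianPDFReal s 1).ennreal_ofReal,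
          lintegral_gaussianPDFReal_eq_one s one_ne_zero, mul_one]

lemma aux_pdf_mul_exp_sq (t x : ℝ) :
    gaussianPDFReal 0 1 x * Real.exp (t ^ 2 * x ^ 2 / 2)
      = (Real.sqrt (2 * π))⁻¹ * Real.exp (-((1 - t ^ 2) / 2) * x ^ 2) := by
  simp only [gaussianPDFReal, NNReal.coe_one, mul_one, sub_zero]
  rw [mul_assoc, ← Real.exp_add]
  congr 2
  ring

lemma aux_lintegral_exp_sq_lt {t : ℝ} (ht : |t| < 1) :
    ∫⁻ x, ENNReal.ofReal (Real.exp (t ^ 2 * x ^ 2 / 2)) ∂(gaussianReal 0 1)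
      = ENNReal.ofReal ((Real.sqrt (1 - t ^ 2))⁻¹) := by
  have ht2 : t ^ 2 < 1 := by nlinarith [sq_abs t, abs_nonneg t]
  have hb : 0 < (1 - t ^ 2) / 2 := by linarith
  rw [gaussianReal_of_var_ne_zero 0 one_ne_zero,
    lintegral_withDensity_eq_lintegral_mul _ (measurable_gaussianPDF 0 1) (by fun_prop)]
  simp only [Pi.mul_apply, gaussianPDF]
  have hcalc : ∫⁻ x, ENNReal.ofReal (gaussianPDFReal 0 1 x) *
      ENNReal.ofReal (Real.exp (t ^ 2 * x ^ 2 / 2))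
      = ∫⁻ x, ENNReal.ofReal ((Real.sqrt (2 * π))⁻¹ * Real.exp (-((1 - t ^ 2) / 2) * x ^ 2)) := by
    refine lintegral_congr fun x => ?_
    rw [← ENNReal.ofReal_mul (gaussianPDFReal_nonneg 0 1 x), aux_pdf_mul_exp_sq]
  rw [hcalc, ← ofReal_integral_eq_lintegral_ofReal
    (((integrable_exp_neg_mul_sq hb).const_mul _))
    (ae_of_all _ fun x => by positivity)]
  rw [integral_const_mul, integral_gaussian]
  congr 1
  have hpi : (0:ℝ) < π := pi_pos
  have h1 : π / ((1 - t ^ 2) / 2) = (2 * π) * (1 - t ^ 2)⁻¹ := by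
    field_simp
  rw [h1, Real.sqrt_mul (by positivity : (0:ℝ) ≤ 2 * π) ((1 - t ^ 2)⁻¹), Real.sqrt_inv]
  have h2 : Real.sqrt (2 * π) ≠ 0 := by positivity
  field_simp

lemma aux_lintegral_exp_sq_top {t : ℝ} (ht : 1 ≤ |t|) :
    ∫⁻ x, ENNReal.ofReal (Real.exp (t ^ 2 * x ^ 2 / 2)) ∂(gaussianReal 0 1) = ⊤ := by
  have ht2 : 1 ≤ t ^ 2 := by nlinarith [sq_abs t, abs_nonneg t]
  rw [gaussianReal_of_var_ne_zero 0 one_ne_zero,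
    lintegral_withDensity_eq_lintegral_mul _ (measurable_gaussianPDF 0 1) (by fun_prop)]
  simp only [Pi.mul_apply, gaussianPDF]
  rw [eq_top_iff]
  calc (⊤ : ℝ≥0∞) = ∫⁻ _ : ℝ, ENNReal.ofReal ((Real.sqrt (2 * π))⁻¹) := by
        rw [lintegral_const]
        rw [Real.volume_univ, ENNReal.mul_top]
        simp only [ne_eq, ENNReal.ofReal_eq_zero, not_le, inv_pos]
        positivity
    _ ≤ _ := by
        refine lintegral_mono fun x => ?_
        rw [← ENNReal.ofReal_mul (gaussianPDFReal_nonneg 0 1 x), aux_pdf_mul_exp_sq]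
        refine ENNReal.ofReal_le_ofReal ?_
        have h1 : (1:ℝ) ≤ Real.exp (-((1 - t ^ 2) / 2) * x ^ 2) :=
          Real.one_le_exp (by nlinarith [sq_nonneg x])
        nlinarith [Real.sqrt_nonneg (2 * π), inv_nonneg.2 (Real.sqrt_nonneg (2 * π)), h1]

lemma aux_lintegral_prod (t : ℝ) :
    ∫⁻ p : ℝ × ℝ, ENNReal.ofReal (Real.exp (t * p.1 * p.2))
        ∂((gaussianReal 0 1).prod (gaussianReal 0 1))
      = ∫⁻ x, ENNReal.ofReal (Real.exp (t ^ 2 * x ^ 2 / 2)) ∂(gaussianReal 0 1) := by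
  rw [lintegral_prod _ (by fun_prop)]
  refine lintegral_congr fun x => ?_
  have h := aux_lintegral_exp_mul_gaussian (t * x)
  simpa [mul_pow, mul_assoc] using h

theorem exp_prod_gaussians_integrable_iff {Ω : Type*} [MeasurableSpace Ω]
    (μ : Measure Ω) [IsProbabilityMeasure μ] (Z₁ Z₂ : Ω → ℝ)
    (h₁ : Measure.map Z₁ μ = gaussianReal 0 1)
    (h₂ : Measure.map Z₂ μ = gaussianReal 0 1)
    (hmeas₁ : Measurable Z₁) (hmeas₂ : Measurable Z₂)
    (hindep : IndepFun Z₁ Z₂ μ) (t : ℝ) :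
    (Integrable (fun ω => Real.exp (t * Z₁ ω * Z₂ ω)) μ ↔ |t| < 1) ∧
      (|t| < 1 →
        ∫ ω, Real.exp (t * Z₁ ω * Z₂ ω) ∂μ = (Real.sqrt (1 - t ^ 2))⁻¹) := by
  set γ := gaussianReal 0 1 with hγ
  have hpair : Measure.map (fun ω => (Z₁ ω, Z₂ ω)) μ = γ.prod γ := by
    have h := (indepFun_iff_map_prod_eq_prod_map_map hmeas₁.aemeasurable
      hmeas₂.aemeasurable).mp hindep
    rw [h₁, h₂] at h
    exact h
  have hmp : Measurable (fun ω => (Z₁ ω, Z₂ ω)) := hmeas₁.prodMk hmeas₂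
  have hfm : Measurable (fun p : ℝ × ℝ => Real.exp (t * p.1 * p.2)) := by fun_prop
  have hInt : Integrable (fun ω => Real.exp (t * Z₁ ω * Z₂ ω)) μ ↔
      Integrable (fun p : ℝ × ℝ => Real.exp (t * p.1 * p.2)) (γ.prod γ) := by
    rw [← hpair]
    exact (integrable_map_measure hfm.aestronglyMeasurable hmp.aemeasurable).symm
  have h0 : 0 ≤ᵐ[γ.prod γ] fun p : ℝ × ℝ => Real.exp (t * p.1 * p.2) :=
    ae_of_all _ fun p => (Real.exp_pos _).le
  have hIntIff : Integrable (fun p : ℝ × ℝ => Real.exp (t * p.1 * p.2)) (γ.prod γ) ↔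
      (∫⁻ p : ℝ × ℝ, ENNReal.ofReal (Real.exp (t * p.1 * p.2)) ∂(γ.prod γ)) < ⊤ := by
    constructor
    · intro h
      exact (hasFiniteIntegral_iff_ofReal h0).mp h.hasFiniteIntegral
    · intro h
      exact ⟨hfm.aestronglyMeasurable, (hasFiniteIntegral_iff_ofReal h0).mpr h⟩
  have hIff : Integrable (fun ω => Real.exp (t * Z₁ ω * Z₂ ω)) μ ↔ |t| < 1 := by
    rw [hInt, hIntIff, aux_lintegral_prod]
    constructor
    · intro h
      by_contra hc
      rw [aux_lintegral_exp_sq_top (not_lt.mp hc)] at h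
      exact absurd h (lt_irrefl _)
    · intro h
      rw [aux_lintegral_exp_sq_lt h]
      exact ENNReal.ofReal_lt_top
  refine ⟨hIff, fun ht => ?_⟩
  have hval : ∫ ω, Real.exp (t * Z₁ ω * Z₂ ω) ∂μ
      = ∫ p : ℝ × ℝ, Real.exp (t * p.1 * p.2) ∂(γ.prod γ) := by
    rw [← hpair, integral_map hmp.aemeasurable hfm.aestronglyMeasurable]
  rw [hval, integral_eq_lintegral_of_nonneg_ae h0 hfm.aestronglyMeasurable,
    aux_lintegral_prod, aux_lintegral_exp_sq_lt ht,
    ENNReal.toReal_ofReal (by positivity)]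
end

section
/- Let 0 < |ρ| < 1 and let (Z_i)_{i≥1} be a sequence of independent standard Gaussian random variables. Then the U-statistic means converge in probability: (p choose 2)⁻¹ · Σ_{1 ≤ u < v ≤ p} exp(−ρ Z_u Z_v) → (1 − ρ²)^{−1/2} as p → ∞. -/
open MeasureTheory ProbabilityTheory Filter Real
open scoped ENNReal NNReal Topology

set_option linter.unusedSectionVars false
set_option maxHeartbeats 1000000

namespace UStatAux

/- ### Gaussian integral computations -/

lemma gpdf01 (x : ℝ) : gaussianPDFReal 0 1 x = (√(2*π))⁻¹ * rexp (-x^2/2) := by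
  simp [gaussianPDFReal]

lemma meas_toNN : Measurable fun x => (gaussianPDFReal 0 1 x).toNNReal :=
  (measurable_gaussianPDFReal 0 1).real_toNNReal

lemma smul_eq_pdf_mul (g : ℝ → ℝ) (x : ℝ) :
    (gaussianPDFReal 0 1 x).toNNReal • g x = gaussianPDFReal 0 1 x * g x := by
  rw [NNReal.smul_def, Real.coe_toNNReal _ (gaussianPDFReal_nonneg 0 1 x), smul_eq_mul]

lemma gaussianReal01_eq : gaussianReal 0 1 =
    volume.withDensity (fun x => ((gaussianPDFReal 0 1 x).toNNReal : ℝ≥0∞)) := by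
  rw [gaussianReal_of_var_ne_zero _ one_ne_zero]
  rfl

lemma integral_gaussianReal01 (g : ℝ → ℝ) :
    ∫ x, g x ∂(gaussianReal 0 1) = ∫ x, gaussianPDFReal 0 1 x * g x := by
  rw [gaussianReal01_eq, integral_withDensity_eq_integral_smul meas_toNN]
  exact integral_congr_ae (Filter.Eventually.of_forall fun x => smul_eq_pdf_mul g x)

lemma integrable_gaussianReal01_iff (g : ℝ → ℝ) :
    Integrable g (gaussianReal 0 1) ↔ Integrable (fun x => gaussianPDFReal 0 1 x * g x) volume := by
  rw [gaussianReal01_eq, integrable_withDensity_iff_integrable_smul meas_toNN]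
  exact integrable_congr (Filter.Eventually.of_forall fun x => smul_eq_pdf_mul g x)

lemma sqrt_two_pi_pos : (0:ℝ) < √(2*π) := Real.sqrt_pos.2 (by positivity)

lemma pdf_mul_exp_mul (t x : ℝ) : gaussianPDFReal 0 1 x * rexp (t*x)
    = rexp (t^2/2) * ((√(2*π))⁻¹ * rexp (-(1/2) * (x - t)^2)) := by
  rw [gpdf01, mul_assoc, ← Real.exp_add, mul_comm (rexp _), mul_assoc, ← Real.exp_add]
  congr 2
  ring

lemma integrable_exp_mul_gaussian (t : ℝ) :
    Integrable (fun x => rexp (t * x)) (gaussianReal 0 1) := by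
  rw [integrable_gaussianReal01_iff]
  have : Integrable (fun x : ℝ => rexp (-(1/2) * (x - t)^2)) volume :=
    (integrable_exp_neg_mul_sq (by norm_num : (0:ℝ) < 1/2)).comp_sub_right t
  simp_rw [pdf_mul_exp_mul]
  exact (this.const_mul _).const_mul _

lemma integral_exp_mul_gaussian (t : ℝ) :
    ∫ x, rexp (t * x) ∂(gaussianReal 0 1) = rexp (t^2/2) := by
  rw [integral_gaussianReal01]
  simp_rw [pdf_mul_exp_mul]
  rw [integral_const_mul, integral_const_mul,
    integral_sub_right_eq_self (fun x : ℝ => rexp (-(1/2) * x^2)) t, integral_gaussian]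
  have : √(π / (1/2)) = √(2*π) := by norm_num [mul_comm]
  rw [this, inv_mul_cancel₀ sqrt_two_pi_pos.ne', mul_one]

lemma pdf_mul_exp_sq (c x : ℝ) : gaussianPDFReal 0 1 x * rexp (c*x^2)
    = (√(2*π))⁻¹ * rexp (-(1/2 - c) * x^2) := by
  rw [gpdf01, mul_assoc, ← Real.exp_add]
  congr 2
  ring

lemma integrable_exp_sq_gaussian {c : ℝ} (hc : c < 1/2) :
    Integrable (fun x => rexp (c * x^2)) (gaussianReal 0 1) := by
  rw [integrable_gaussianReal01_iff]
  have : Integrable (fun x : ℝ => rexp (-(1/2 - c) * x^2)) volume :=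
    integrable_exp_neg_mul_sq (by linarith)
  simp_rw [pdf_mul_exp_sq]
  exact this.const_mul _

lemma integral_exp_sq_gaussian {c : ℝ} (hc : c < 1/2) :
    ∫ x, rexp (c * x^2) ∂(gaussianReal 0 1) = (√(1 - 2*c))⁻¹ := by
  rw [integral_gaussianReal01]
  simp_rw [pdf_mul_exp_sq]
  rw [integral_const_mul, integral_gaussian]
  have h2 : (0:ℝ) < 1/2 - c := by linarith
  have h3 : (0:ℝ) < 1 - 2*c := by linarith
  have : π / (1/2 - c) = 2 * π * (1 - 2*c)⁻¹ := by
    field_simp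
  rw [this, Real.sqrt_mul (by positivity : (0:ℝ) ≤ 2*π) ((1-2*c)⁻¹), Real.sqrt_inv, ← mul_assoc,
    inv_mul_cancel₀ sqrt_two_pi_pos.ne', one_mul]

/- ### The kernel on the product of two Gaussians -/

noncomputable def γ2 : Measure (ℝ × ℝ) := (gaussianReal 0 1).prod (gaussianReal 0 1)

instance : IsProbabilityMeasure γ2 := by unfold γ2; infer_instance

lemma meas_kernel (ρ : ℝ) : Measurable (fun z : ℝ × ℝ => rexp (-ρ * z.1 * z.2)) := by
  apply Real.measurable_exp.comp
  exact (measurable_const.mul measurable_fst).mul measurable_snd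

lemma rho_sq_half {ρ : ℝ} (hρ : |ρ| < 1) : ρ^2/2 < 1/2 := by
  have : ρ^2 < 1 := by nlinarith [sq_abs ρ, abs_nonneg ρ]
  linarith

lemma inner_int (ρ x : ℝ) :
    ∫ y, rexp (-ρ * x * y) ∂(gaussianReal 0 1) = rexp (ρ^2/2 * x^2) := by
  rw [integral_exp_mul_gaussian (-ρ * x)]
  congr 1
  ring

lemma integrable_kernel {ρ : ℝ} (hρ : |ρ| < 1) :
    Integrable (fun z : ℝ × ℝ => rexp (-ρ * z.1 * z.2)) γ2 := by
  rw [γ2, integrable_prod_iff (meas_kernel ρ).aestronglyMeasurable]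
  constructor
  · refine Filter.Eventually.of_forall fun x => ?_
    exact integrable_exp_mul_gaussian (-ρ * x)
  · have hint : (fun x : ℝ => ∫ y, ‖rexp (-ρ * x * y)‖ ∂(gaussianReal 0 1))
        = fun x => rexp (ρ^2/2 * x^2) := by
      ext x
      simp_rw [Real.norm_eq_abs, abs_exp]
      exact inner_int ρ x
    simpa only [hint] using integrable_exp_sq_gaussian (rho_sq_half hρ)

lemma integral_kernel {ρ : ℝ} (hρ : |ρ| < 1) :
    ∫ z, rexp (-ρ * z.1 * z.2) ∂γ2 = (√(1 - ρ^2))⁻¹ := by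
  rw [γ2, integral_prod _ (by rw [← γ2]; exact integrable_kernel hρ)]
  calc ∫ x, ∫ y, rexp (-ρ * x * y) ∂(gaussianReal 0 1) ∂(gaussianReal 0 1)
      = ∫ x, rexp (ρ^2/2 * x^2) ∂(gaussianReal 0 1) :=
        integral_congr_ae (Filter.Eventually.of_forall fun x => inner_int ρ x)
    _ = (√(1 - 2*(ρ^2/2)))⁻¹ := integral_exp_sq_gaussian (rho_sq_half hρ)
    _ = (√(1 - ρ^2))⁻¹ := by ring_nf

/- ### Truncation -/

noncomputable def tfun (ρ : ℝ) (n : ℕ) : ℝ × ℝ → ℝ := fun z => min (rexp (-ρ * z.1 * z.2)) n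

noncomputable def mtr (ρ : ℝ) (n : ℕ) : ℝ := ∫ z, tfun ρ n z ∂γ2

lemma meas_tfun (ρ : ℝ) (n : ℕ) : Measurable (tfun ρ n) :=
  (meas_kernel ρ).min measurable_const

lemma tfun_nonneg (ρ : ℝ) (n : ℕ) (z : ℝ × ℝ) : 0 ≤ tfun ρ n z :=
  le_min (Real.exp_pos _).le (Nat.cast_nonneg n)

lemma tfun_le_n (ρ : ℝ) (n : ℕ) (z : ℝ × ℝ) : tfun ρ n z ≤ n := min_le_right _ _

lemma tfun_le_k (ρ : ℝ) (n : ℕ) (z : ℝ × ℝ) : tfun ρ n z ≤ rexp (-ρ * z.1 * z.2) :=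
  min_le_left _ _

lemma integrable_trunc {ρ : ℝ} (hρ : |ρ| < 1) (n : ℕ) : Integrable (tfun ρ n) γ2 :=
  (integrable_kernel hρ).mono' (meas_tfun ρ n).aestronglyMeasurable
    (Filter.Eventually.of_forall fun z => by
      rw [Real.norm_eq_abs, abs_of_nonneg (tfun_nonneg ρ n z)]
      exact tfun_le_k ρ n z)

lemma mtr_nonneg (ρ : ℝ) (n : ℕ) : 0 ≤ mtr ρ n :=
  integral_nonneg (tfun_nonneg ρ n)

lemma mtr_le_n {ρ : ℝ} (hρ : |ρ| < 1) (n : ℕ) : mtr ρ n ≤ n := by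
  have := integral_mono (integrable_trunc hρ n) (integrable_const (n:ℝ)) (tfun_le_n ρ n)
  simpa [mtr] using this

lemma mtr_le_m {ρ : ℝ} (hρ : |ρ| < 1) (n : ℕ) : mtr ρ n ≤ (√(1 - ρ^2))⁻¹ := by
  rw [← integral_kernel hρ]
  exact integral_mono (integrable_trunc hρ n) (integrable_kernel hρ) (tfun_le_k ρ n)

lemma dev_abs_le {ρ : ℝ} (hρ : |ρ| < 1) (n : ℕ) (z : ℝ × ℝ) :
    |tfun ρ n z - mtr ρ n| ≤ n := by
  have h1 := tfun_nonneg ρ n z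
  have h2 := tfun_le_n ρ n z
  have h3 := mtr_nonneg ρ n
  have h4 := mtr_le_n hρ n
  rw [abs_le]
  constructor <;> linarith

lemma tendsto_trunc {ρ : ℝ} (hρ : |ρ| < 1) :
    Tendsto (fun n : ℕ => mtr ρ n) atTop (𝓝 ((√(1 - ρ^2))⁻¹)) := by
  rw [← integral_kernel hρ]
  refine tendsto_integral_of_dominated_convergence _
    (fun n => (meas_tfun ρ n).aestronglyMeasurable)
    (integrable_kernel hρ) (fun n => Filter.Eventually.of_forall fun z => ?_)
    (Filter.Eventually.of_forall fun z => ?_)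
  · rw [Real.norm_eq_abs, abs_of_nonneg (tfun_nonneg ρ n z)]
    exact tfun_le_k ρ n z
  · refine tendsto_const_nhds.congr' ?_
    refine (Filter.eventually_atTop.2 ⟨⌈rexp (-ρ * z.1 * z.2)⌉₊, fun n hn => ?_⟩)
    exact (min_eq_left ((Nat.le_ceil _).trans (Nat.cast_le.2 hn))).symm

/- ### Edge sets -/

def edges (p : ℕ) : Finset (ℕ × ℕ) :=
  (Finset.range p ×ˢ Finset.range p).filter (fun e => e.1 < e.2)

lemma mem_edges {p : ℕ} {e : ℕ × ℕ} (he : e ∈ edges p) :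
    e.1 < p ∧ e.2 < p ∧ e.1 < e.2 := by
  simp only [edges, Finset.mem_filter, Finset.mem_product, Finset.mem_range] at he
  tauto

lemma sum_edges (p : ℕ) (f : ℕ → ℕ → ℝ) :
    ∑ u ∈ Finset.range p, ∑ v ∈ Finset.Ioo u p, f u v = ∑ e ∈ edges p, f e.1 e.2 := by
  rw [edges, Finset.sum_filter, Finset.sum_product]
  refine Finset.sum_congr rfl fun u hu => ?_
  rw [← Finset.sum_filter]
  congr 1
  ext v
  simp only [Finset.mem_filter, Finset.mem_range, Finset.mem_Ioo]
  tauto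

lemma card_edges (p : ℕ) : (edges p).card = p.choose 2 := by
  have h : ((edges p).card : ℕ) = ∑ u ∈ Finset.range p, (Finset.Ioo u p).card := by
    rw [Finset.card_eq_sum_ones, edges, Finset.sum_filter, Finset.sum_product]
    refine Finset.sum_congr rfl fun u hu => ?_
    rw [Finset.card_eq_sum_ones, ← Finset.sum_filter]
    congr 1
    ext v
    simp only [Finset.mem_filter, Finset.mem_range, Finset.mem_Ioo]
    tauto
  rw [h]
  have h2 : ∀ u ∈ Finset.range p, (Finset.Ioo u p).card = p - 1 - u := by
    intro u hu
    rw [Nat.card_Ioo]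
    omega
  rw [Finset.sum_congr rfl h2, ← Finset.sum_range_reflect (fun i => p - 1 - i) p]
  have h3 : ∀ j ∈ Finset.range p, p - 1 - (p - 1 - j) = j := by
    intro j hj
    rw [Finset.mem_range] at hj
    omega
  rw [Finset.sum_congr rfl h3, Finset.sum_range_id, Nat.choose_two_right]

lemma card_shares {p : ℕ} (u v : ℕ) :
    ((edges p).filter (fun e' => e'.1 = u ∨ e'.1 = v ∨ e'.2 = u ∨ e'.2 = v)).card ≤ 4 * p := by
  have hsub : (edges p).filter (fun e' => e'.1 = u ∨ e'.1 = v ∨ e'.2 = u ∨ e'.2 = v)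
      ⊆ ({u, v} ×ˢ Finset.range p) ∪ (Finset.range p ×ˢ {u, v}) := by
    intro e he
    simp only [Finset.mem_filter] at he
    obtain ⟨he1, he2⟩ := he
    have hm := mem_edges he1
    simp only [Finset.mem_union, Finset.mem_product, Finset.mem_insert, Finset.mem_singleton,
      Finset.mem_range]
    tauto
  calc _ ≤ (({u, v} ×ˢ Finset.range p) ∪ (Finset.range p ×ˢ {u, v})).card :=
        Finset.card_le_card hsub
    _ ≤ (({u, v} : Finset ℕ) ×ˢ Finset.range p).card
        + ((Finset.range p) ×ˢ ({u, v} : Finset ℕ)).card := Finset.card_union_le _ _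
    _ ≤ 4 * p := by
        rw [Finset.card_product, Finset.card_product, Finset.card_range]
        have : ({u, v} : Finset ℕ).card ≤ 2 := Finset.card_insert_le _ _ |>.trans (by simp)
        nlinarith

/- ### Markov inequality -/

lemma markov_meas {Ω : Type*} [MeasurableSpace Ω] (μ : Measure Ω) {g : Ω → ℝ}
    (hg : Integrable g μ) (hg0 : 0 ≤ g) {ε : ℝ} (hε : 0 < ε) :
    μ {ω | ε ≤ g ω} ≤ ENNReal.ofReal ((∫ ω, g ω ∂μ) / ε) := by
  have h1 : μ {ω | ε ≤ g ω} ≤ μ {ω | ENNReal.ofReal ε ≤ ENNReal.ofReal (g ω)} := by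
    apply measure_mono
    intro ω hω
    exact ENNReal.ofReal_le_ofReal hω
  have h2 := mul_meas_ge_le_lintegral₀ (μ := μ)
    (hg.aemeasurable.ennreal_ofReal) (ENNReal.ofReal ε)
  rw [← ofReal_integral_eq_lintegral_ofReal hg (Filter.Eventually.of_forall hg0)] at h2
  have h3 : μ {ω | ENNReal.ofReal ε ≤ ENNReal.ofReal (g ω)}
      ≤ ENNReal.ofReal (∫ ω, g ω ∂μ) / ENNReal.ofReal ε := by
    rw [ENNReal.le_div_iff_mul_le (Or.inl (by simp [hε])) (Or.inl ENNReal.ofReal_ne_top)]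
    rw [mul_comm]
    exact h2
  refine h1.trans (h3.trans ?_)
  rw [ENNReal.ofReal_div_of_pos hε]

/- ### Probabilistic transfer lemmas -/

variable {Ω : Type*} [MeasurableSpace Ω] {μ : Measure Ω} [IsProbabilityMeasure μ]
  {Z : ℕ → Ω → ℝ}

lemma map_pair (hZ : ∀ i, Measure.map (Z i) μ = gaussianReal 0 1)
    (hmeas : ∀ i, Measurable (Z i))
    (hindep : iIndepFun Z μ) {u v : ℕ} (huv : u ≠ v) :
    Measure.map (fun ω => (Z u ω, Z v ω)) μ = γ2 := by
  have h := hindep.indepFun huv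
  rw [indepFun_iff_map_prod_eq_prod_map_map (hmeas u).aemeasurable (hmeas v).aemeasurable] at h
  rw [h, hZ u, hZ v, γ2]

lemma integral_pairZ (hZ : ∀ i, Measure.map (Z i) μ = gaussianReal 0 1)
    (hmeas : ∀ i, Measurable (Z i))
    (hindep : iIndepFun Z μ) {u v : ℕ} (huv : u ≠ v)
    {f : ℝ × ℝ → ℝ} (hf : Measurable f) :
    ∫ ω, f (Z u ω, Z v ω) ∂μ = ∫ z, f z ∂γ2 := by
  rw [← map_pair hZ hmeas hindep huv,
    integral_map ((hmeas u).prodMk (hmeas v)).aemeasurable hf.aestronglyMeasurable]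

lemma integrable_pairZ (hZ : ∀ i, Measure.map (Z i) μ = gaussianReal 0 1)
    (hmeas : ∀ i, Measurable (Z i))
    (hindep : iIndepFun Z μ) {u v : ℕ} (huv : u ≠ v)
    {f : ℝ × ℝ → ℝ} (hf : Measurable f) (hfi : Integrable f γ2) :
    Integrable (fun ω => f (Z u ω, Z v ω)) μ := by
  rw [← map_pair hZ hmeas hindep huv] at hfi
  exact (integrable_map_measure hf.aestronglyMeasurable
    ((hmeas u).prodMk (hmeas v)).aemeasurable).mp hfi

lemma indep_pairsZ (hmeas : ∀ i, Measurable (Z i))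
    (hindep : iIndepFun Z μ) {u v u' v' : ℕ}
    (h1 : u ≠ u') (h2 : u ≠ v') (h3 : v ≠ u') (h4 : v ≠ v')
    {f g : ℝ × ℝ → ℝ} (hf : Measurable f) (hg : Measurable g) :
    IndepFun (fun ω => f (Z u ω, Z v ω)) (fun ω => g (Z u' ω, Z v' ω)) μ :=
  (hindep.indepFun_prodMk_prodMk hmeas u v u' v' h1 h2 h3 h4).comp hf hg



/- ### Deviation function -/

noncomputable def dev (ρ : ℝ) (n : ℕ) : ℝ × ℝ → ℝ := fun z => tfun ρ n z - mtr ρ n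

lemma meas_dev (ρ : ℝ) (n : ℕ) : Measurable (dev ρ n) := (meas_tfun ρ n).sub measurable_const

lemma integrable_dev {ρ : ℝ} (hρ : |ρ| < 1) (n : ℕ) : Integrable (dev ρ n) γ2 :=
  (integrable_trunc hρ n).sub (integrable_const _)

lemma integral_dev {ρ : ℝ} (hρ : |ρ| < 1) (n : ℕ) : ∫ z, dev ρ n z ∂γ2 = 0 := by
  rw [show dev ρ n = fun z => tfun ρ n z - mtr ρ n from rfl,
    integral_sub (integrable_trunc hρ n) (integrable_const _), integral_const]
  simp [mtr]

section Main

variable {Ω : Type*} [MeasurableSpace Ω] {μ : Measure Ω} [IsProbabilityMeasure μ]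
  {Z : ℕ → Ω → ℝ} {ρ : ℝ}

variable (hρ : |ρ| < 1) (hZ : ∀ i, Measure.map (Z i) μ = gaussianReal 0 1)
  (hmeas : ∀ i, Measurable (Z i)) (hindep : iIndepFun Z μ)

include hρ hZ hmeas hindep

lemma integrable_devZ (n : ℕ) {u v : ℕ} (huv : u ≠ v) :
    Integrable (fun ω => dev ρ n (Z u ω, Z v ω)) μ :=
  integrable_pairZ hZ hmeas hindep huv (meas_dev ρ n) (integrable_dev hρ n)

lemma integral_devZ (n : ℕ) {u v : ℕ} (huv : u ≠ v) :
    ∫ ω, dev ρ n (Z u ω, Z v ω) ∂μ = 0 := by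
  rw [integral_pairZ hZ hmeas hindep huv (meas_dev ρ n), integral_dev hρ n]

lemma integrable_dev_mul (n : ℕ) {u v u' v' : ℕ} (huv : u ≠ v) (hu'v' : u' ≠ v') :
    Integrable (fun ω => dev ρ n (Z u ω, Z v ω) * dev ρ n (Z u' ω, Z v' ω)) μ :=
  Integrable.bdd_mul (integrable_devZ hρ hZ hmeas hindep n hu'v')
    ((meas_dev ρ n).comp ((hmeas u).prodMk (hmeas v))).aestronglyMeasurable
    (Filter.Eventually.of_forall fun ω => by rw [Real.norm_eq_abs]; exact dev_abs_le hρ n _)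

lemma integral_dev_mul_le (n : ℕ) {u v u' v' : ℕ} (huv : u ≠ v) (hu'v' : u' ≠ v') :
    ∫ ω, dev ρ n (Z u ω, Z v ω) * dev ρ n (Z u' ω, Z v' ω) ∂μ ≤ (n:ℝ)^2 := by
  have hb : ∀ ω : Ω, ‖dev ρ n (Z u ω, Z v ω) * dev ρ n (Z u' ω, Z v' ω)‖ ≤ (n:ℝ)^2 := fun ω => by
    rw [norm_mul, Real.norm_eq_abs, Real.norm_eq_abs, sq]
    exact mul_le_mul (dev_abs_le hρ n _) (dev_abs_le hρ n _) (abs_nonneg _) (Nat.cast_nonneg n)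
  calc ∫ ω, dev ρ n (Z u ω, Z v ω) * dev ρ n (Z u' ω, Z v' ω) ∂μ
      ≤ ‖∫ ω, dev ρ n (Z u ω, Z v ω) * dev ρ n (Z u' ω, Z v' ω) ∂μ‖ := le_abs_self _
    _ ≤ ∫ ω, ‖dev ρ n (Z u ω, Z v ω) * dev ρ n (Z u' ω, Z v' ω)‖ ∂μ :=
        norm_integral_le_integral_norm _
    _ ≤ ∫ ω, ((n:ℝ)^2 : ℝ) ∂μ := integral_mono
        (integrable_dev_mul hρ hZ hmeas hindep n huv hu'v').norm (integrable_const _) hb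
    _ = (n:ℝ)^2 := by simp

lemma integral_dev_mul_eq_zero (n : ℕ) {u v u' v' : ℕ} (huv : u ≠ v) (hu'v' : u' ≠ v')
    (w1 : u ≠ u') (w2 : u ≠ v') (w3 : v ≠ u') (w4 : v ≠ v') :
    ∫ ω, dev ρ n (Z u ω, Z v ω) * dev ρ n (Z u' ω, Z v' ω) ∂μ = 0 := by
  have hik := indep_pairsZ hmeas hindep w1 w2 w3 w4 (meas_dev ρ n) (meas_dev ρ n)
  have h0 := hik.integral_mul_eq_mul_integral (integrable_devZ hρ hZ hmeas hindep n huv).aestronglyMeasurable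
    (integrable_devZ hρ hZ hmeas hindep n hu'v').aestronglyMeasurable
  rw [integral_devZ hρ hZ hmeas hindep n huv, zero_mul] at h0
  rw [← h0]
  rfl

lemma integrable_sq_sum_dev (n p : ℕ) :
    Integrable (fun ω => (∑ e ∈ edges p, dev ρ n (Z e.1 ω, Z e.2 ω))^2) μ := by
  have hsq : ∀ ω : Ω, (∑ e ∈ edges p, dev ρ n (Z e.1 ω, Z e.2 ω))^2
      = ∑ e ∈ edges p, ∑ e' ∈ edges p,
          dev ρ n (Z e.1 ω, Z e.2 ω) * dev ρ n (Z e'.1 ω, Z e'.2 ω) := fun ω => by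
    rw [sq, Finset.sum_mul_sum]
  simp_rw [hsq]
  exact integrable_finset_sum _ (fun e he => integrable_finset_sum _ (fun e' he' =>
    integrable_dev_mul hρ hZ hmeas hindep n (mem_edges he).2.2.ne (mem_edges he').2.2.ne))

lemma var_bound (n p : ℕ) :
    ∫ ω, (∑ e ∈ edges p, dev ρ n (Z e.1 ω, Z e.2 ω))^2 ∂μ
      ≤ (p.choose 2 : ℝ) * ((4*p) * (n:ℝ)^2) := by
  have hne : ∀ {e : ℕ × ℕ}, e ∈ edges p → e.1 ≠ e.2 := fun he => (mem_edges he).2.2.ne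
  have hprod : ∀ e ∈ edges p, ∀ e' ∈ edges p,
      Integrable (fun ω => dev ρ n (Z e.1 ω, Z e.2 ω) * dev ρ n (Z e'.1 ω, Z e'.2 ω)) μ :=
    fun e he e' he' => integrable_dev_mul hρ hZ hmeas hindep n (hne he) (hne he')
  have hsq : ∀ ω : Ω, (∑ e ∈ edges p, dev ρ n (Z e.1 ω, Z e.2 ω))^2
      = ∑ e ∈ edges p, ∑ e' ∈ edges p,
          dev ρ n (Z e.1 ω, Z e.2 ω) * dev ρ n (Z e'.1 ω, Z e'.2 ω) := fun ω => by
    rw [sq, Finset.sum_mul_sum]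
  simp_rw [hsq]
  rw [integral_finset_sum _ (fun e he => integrable_finset_sum _ (fun e' he' => hprod e he e' he'))]
  have key : ∀ e ∈ edges p,
      ∫ ω, ∑ e' ∈ edges p, dev ρ n (Z e.1 ω, Z e.2 ω) * dev ρ n (Z e'.1 ω, Z e'.2 ω) ∂μ
        ≤ (4*p : ℝ) * (n:ℝ)^2 := by
    intro e he
    rw [integral_finset_sum _ (fun e' he' => hprod e he e' he')]
    classical
    rw [← Finset.sum_filter_add_sum_filter_not (edges p)
      (fun e' => e'.1 = e.1 ∨ e'.1 = e.2 ∨ e'.2 = e.1 ∨ e'.2 = e.2)]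
    have hzero : ∑ e' ∈ (edges p).filter
        (fun e' => ¬(e'.1 = e.1 ∨ e'.1 = e.2 ∨ e'.2 = e.1 ∨ e'.2 = e.2)),
        ∫ ω, dev ρ n (Z e.1 ω, Z e.2 ω) * dev ρ n (Z e'.1 ω, Z e'.2 ω) ∂μ = 0 := by
      refine Finset.sum_eq_zero fun e' he' => ?_
      rw [Finset.mem_filter] at he'
      push_neg at he'
      obtain ⟨he'mem, w1, w2, w3, w4⟩ := he'
      exact integral_dev_mul_eq_zero hρ hZ hmeas hindep n (hne he) (hne he'mem)
        (Ne.symm w1) (Ne.symm w3) (Ne.symm w2) (Ne.symm w4)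
    rw [hzero, add_zero]
    calc ∑ e' ∈ (edges p).filter
          (fun e' => e'.1 = e.1 ∨ e'.1 = e.2 ∨ e'.2 = e.1 ∨ e'.2 = e.2),
          ∫ ω, dev ρ n (Z e.1 ω, Z e.2 ω) * dev ρ n (Z e'.1 ω, Z e'.2 ω) ∂μ
        ≤ ∑ e' ∈ (edges p).filter
          (fun e' => e'.1 = e.1 ∨ e'.1 = e.2 ∨ e'.2 = e.1 ∨ e'.2 = e.2), (n:ℝ)^2 :=
          Finset.sum_le_sum (fun e' he' => integral_dev_mul_le hρ hZ hmeas hindep n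
            (hne he) (hne (Finset.mem_of_mem_filter _ he')))
      _ = (((edges p).filter
          (fun e' => e'.1 = e.1 ∨ e'.1 = e.2 ∨ e'.2 = e.1 ∨ e'.2 = e.2)).card : ℝ) * (n:ℝ)^2 := by
          rw [Finset.sum_const, nsmul_eq_mul]
      _ ≤ (4*p : ℝ) * (n:ℝ)^2 := by
          have hc := card_shares (p := p) e.1 e.2
          have : ((((edges p).filter
              (fun e' => e'.1 = e.1 ∨ e'.1 = e.2 ∨ e'.2 = e.1 ∨ e'.2 = e.2)).card : ℝ))
              ≤ (4*p : ℝ) := by exact_mod_cast hc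
          exact mul_le_mul_of_nonneg_right this (by positivity)
  calc ∑ e ∈ edges p, ∫ ω, ∑ e' ∈ edges p,
        dev ρ n (Z e.1 ω, Z e.2 ω) * dev ρ n (Z e'.1 ω, Z e'.2 ω) ∂μ
      ≤ ∑ _e ∈ edges p, (4*p : ℝ) * (n:ℝ)^2 := Finset.sum_le_sum key
    _ = ((edges p).card : ℝ) * ((4*p : ℝ) * (n:ℝ)^2) := by rw [Finset.sum_const, nsmul_eq_mul]
    _ = (p.choose 2 : ℝ) * ((4*p) * (n:ℝ)^2) := by rw [card_edges]

end Main

end UStatAux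

open UStatAux in
theorem ustat_mean_tendstoInMeasure {Ω : Type*} [MeasurableSpace Ω]
    (μ : Measure Ω) [IsProbabilityMeasure μ] (ρ : ℝ) (hρ0 : ρ ≠ 0) (hρ : |ρ| < 1)
    (Z : ℕ → Ω → ℝ)
    (hZ : ∀ i, Measure.map (Z i) μ = gaussianReal 0 1)
    (hmeas : ∀ i, Measurable (Z i))
    (hindep : iIndepFun Z μ) :
    TendstoInMeasure μ
      (fun p ω => ((p.choose 2 : ℝ))⁻¹ *
        ∑ u ∈ Finset.range p, ∑ v ∈ Finset.Ioo u p,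
          Real.exp (-ρ * Z u ω * Z v ω))
      atTop
      (fun _ => (Real.sqrt (1 - ρ ^ 2))⁻¹) := by
  set m : ℝ := (Real.sqrt (1 - ρ ^ 2))⁻¹ with hm
  rw [tendstoInMeasure_iff_dist]
  intro ε hε
  rw [ENNReal.tendsto_atTop_zero]
  intro δ hδ
  obtain ⟨d, hd0, hdδ⟩ : ∃ d : ℝ, 0 < d ∧ ENNReal.ofReal d ≤ δ := by
    rcases eq_or_ne δ ⊤ with h | h
    · exact ⟨1, one_pos, by simp [h]⟩
    · exact ⟨δ.toReal, ENNReal.toReal_pos hδ.ne' h, by rw [ENNReal.ofReal_toReal h]⟩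
  -- choose the truncation level n
  have hc0 : 0 < min (ε/3) (d*ε/6) := lt_min (by linarith) (by positivity)
  obtain ⟨n, hn⟩ := ((tendsto_trunc hρ).eventually
    (eventually_gt_nhds (show m - min (ε/3) (d*ε/6) < m by linarith))).exists
  have hmtr_le : mtr ρ n ≤ m := mtr_le_m hρ n
  have h1 : m - mtr ρ n < ε/3 := by
    have := min_le_left (ε/3) (d*ε/6); linarith
  have h2 : m - mtr ρ n < d*ε/6 := by
    have := min_le_right (ε/3) (d*ε/6); linarith
  -- choose the threshold P from the Chebyshev bound
  have hBten : Tendsto (fun p : ℕ => ((p.choose 2 : ℝ))⁻¹ * ((4*p) * (n:ℝ)^2) / (ε/3)^2)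
      atTop (𝓝 0) := by
    have hev : (fun p : ℕ => ((4*(n:ℝ)^2 * 2) / (ε/3)^2) / ((p:ℝ) - 1))
        =ᶠ[atTop] (fun p : ℕ => ((p.choose 2 : ℝ))⁻¹ * ((4*p) * (n:ℝ)^2) / (ε/3)^2) := by
      filter_upwards [eventually_ge_atTop 2] with p hp
      have hp2 : (2:ℝ) ≤ (p:ℝ) := by exact_mod_cast hp
      have hp0 : (0:ℝ) < (p:ℝ) := by linarith
      have hp1 : (0:ℝ) < (p:ℝ) - 1 := by linarith
      rw [Nat.cast_choose_two]
      field_simp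
    refine Tendsto.congr' hev ?_
    apply Tendsto.div_atTop tendsto_const_nhds
    exact (tendsto_atTop_add_const_right _ (-1) tendsto_natCast_atTop_atTop).congr
      (fun p => by ring)
  have hBev : ∀ᶠ p : ℕ in atTop,
      ((p.choose 2 : ℝ))⁻¹ * ((4*p) * (n:ℝ)^2) / (ε/3)^2 < d/2 :=
    hBten.eventually_lt_const (by positivity)
  obtain ⟨P, hP⟩ := Filter.eventually_atTop.1 (hBev.and (Filter.eventually_ge_atTop 2))
  refine ⟨P, fun p hp => ?_⟩
  obtain ⟨hBp, hp2⟩ := hP p hp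
  have hNnat : 0 < p.choose 2 := Nat.choose_pos (by omega)
  have hN : (0:ℝ) < ((p.choose 2 : ℕ) : ℝ) := by exact_mod_cast hNnat
  set N : ℝ := ((p.choose 2 : ℕ) : ℝ) with hNdef
  have hne : ∀ {e : ℕ × ℕ}, e ∈ edges p → e.1 ≠ e.2 := fun he => (mem_edges he).2.2.ne
  -- integrability and integrals of summands
  have hXi : ∀ {u v : ℕ}, u ≠ v → Integrable (fun ω => rexp (-ρ * Z u ω * Z v ω)) μ :=
    fun {u v} huv => integrable_pairZ hZ hmeas hindep huv (meas_kernel ρ) (integrable_kernel hρ)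
  have hXint : ∀ {u v : ℕ}, u ≠ v → ∫ ω, rexp (-ρ * Z u ω * Z v ω) ∂μ = m :=
    fun {u v} huv => by
      rw [show (fun ω => rexp (-ρ * Z u ω * Z v ω))
          = fun ω => (fun z : ℝ × ℝ => rexp (-ρ * z.1 * z.2)) (Z u ω, Z v ω) from rfl,
        integral_pairZ hZ hmeas hindep huv (meas_kernel ρ), integral_kernel hρ]
  have hYi : ∀ {u v : ℕ}, u ≠ v →
      Integrable (fun ω => min (rexp (-ρ * Z u ω * Z v ω)) (n:ℝ)) μ :=
    fun {u v} huv => integrable_pairZ hZ hmeas hindep huv (meas_tfun ρ n) (integrable_trunc hρ n)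
  have hYint : ∀ {u v : ℕ}, u ≠ v →
      ∫ ω, min (rexp (-ρ * Z u ω * Z v ω)) (n:ℝ) ∂μ = mtr ρ n :=
    fun {u v} huv => by
      rw [show (fun ω => min (rexp (-ρ * Z u ω * Z v ω)) (n:ℝ))
          = fun ω => tfun ρ n (Z u ω, Z v ω) from rfl,
        integral_pairZ hZ hmeas hindep huv (meas_tfun ρ n)]
      rfl
  -- abbreviations
  set F : Ω → ℝ := fun ω => ∑ e ∈ edges p, rexp (-ρ * Z e.1 ω * Z e.2 ω) with hF
  set G : Ω → ℝ := fun ω => ∑ e ∈ edges p, min (rexp (-ρ * Z e.1 ω * Z e.2 ω)) (n:ℝ) with hG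
  have hsum : ∀ x : Ω, ∑ u ∈ Finset.range p, ∑ v ∈ Finset.Ioo u p,
      rexp (-ρ * Z u x * Z v x) = F x :=
    fun x => sum_edges p (fun u v => rexp (-ρ * Z u x * Z v x))
  -- integrals of F and G
  have hFi : Integrable F μ := by
    rw [hF]
    exact integrable_finset_sum _ fun e he => hXi (hne he)
  have hGi : Integrable G μ := by
    rw [hG]
    exact integrable_finset_sum _ fun e he => hYi (hne he)
  have hFint : ∫ ω, F ω ∂μ = N * m := by
    rw [hF, integral_finset_sum _ fun e he => hXi (hne he),
      Finset.sum_congr rfl (fun e he => hXint (hne he)), Finset.sum_const, nsmul_eq_mul,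
      card_edges]
  have hGint : ∫ ω, G ω ∂μ = N * mtr ρ n := by
    rw [hG, integral_finset_sum _ fun e he => hYi (hne he),
      Finset.sum_congr rfl (fun e he => hYint (hne he)), Finset.sum_const, nsmul_eq_mul,
      card_edges]
  -- the deviation identity
  have hGd : ∀ ω : Ω, N⁻¹ * G ω - mtr ρ n
      = N⁻¹ * ∑ e ∈ edges p, dev ρ n (Z e.1 ω, Z e.2 ω) := by
    intro ω
    have hd : ∑ e ∈ edges p, dev ρ n (Z e.1 ω, Z e.2 ω) = G ω - N * mtr ρ n := by
      have h0 : ∑ e ∈ edges p, dev ρ n (Z e.1 ω, Z e.2 ω)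
          = ∑ e ∈ edges p, (min (rexp (-ρ * Z e.1 ω * Z e.2 ω)) (n:ℝ) - mtr ρ n) := rfl
      rw [h0, Finset.sum_sub_distrib, Finset.sum_const, nsmul_eq_mul, card_edges, hG]
    rw [hd, mul_sub, ← mul_assoc, inv_mul_cancel₀ hN.ne', one_mul]
  -- part A : the truncation error
  set D : Ω → ℝ := fun ω => N⁻¹ * (F ω - G ω) with hD
  have hFG : ∀ ω : Ω, F ω - G ω = ∑ e ∈ edges p,
      (rexp (-ρ * Z e.1 ω * Z e.2 ω) - min (rexp (-ρ * Z e.1 ω * Z e.2 ω)) (n:ℝ)) := by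
    intro ω
    rw [hF, hG, ← Finset.sum_sub_distrib]
  have hD0 : ∀ ω, 0 ≤ D ω := fun ω => by
    rw [hD]
    refine mul_nonneg (inv_nonneg.2 hN.le) ?_
    rw [hFG ω]
    exact Finset.sum_nonneg fun e he => sub_nonneg.2 (min_le_left _ _)
  have hDi : Integrable D μ := by
    rw [hD]
    exact (hFi.sub hGi).const_mul _
  have hDint : ∫ ω, D ω ∂μ = m - mtr ρ n := by
    rw [hD]
    rw [integral_const_mul, integral_sub hFi hGi, hFint, hGint, ← mul_sub, ← mul_assoc,
      inv_mul_cancel₀ hN.ne', one_mul]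
  have hA : μ {ω | ε/3 ≤ D ω} ≤ ENNReal.ofReal (d/2) := by
    refine (markov_meas μ hDi hD0 (by linarith : (0:ℝ) < ε/3)).trans
      (ENNReal.ofReal_le_ofReal ?_)
    rw [hDint, div_le_iff₀ (by linarith : (0:ℝ) < ε/3)]
    have hdd : d/2 * (ε/3) = d*ε/6 := by ring
    linarith
  -- part B : Chebyshev for the truncated sum
  have hQptw : ∀ ω : Ω, (N⁻¹ * G ω - mtr ρ n)^2
      = (N⁻¹)^2 * (∑ e ∈ edges p, dev ρ n (Z e.1 ω, Z e.2 ω))^2 := fun ω => by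
    rw [hGd ω, mul_pow]
  have hQi : Integrable (fun ω => (N⁻¹ * G ω - mtr ρ n)^2) μ := by
    simp_rw [hQptw]
    exact (integrable_sq_sum_dev hρ hZ hmeas hindep n p).const_mul _
  have hQint : ∫ ω, (N⁻¹ * G ω - mtr ρ n)^2 ∂μ ≤ N⁻¹ * ((4*p) * (n:ℝ)^2) := by
    simp_rw [hQptw]
    rw [integral_const_mul]
    have hv := var_bound hρ hZ hmeas hindep n p
    calc (N⁻¹)^2 * ∫ ω, (∑ e ∈ edges p, dev ρ n (Z e.1 ω, Z e.2 ω))^2 ∂μ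
        ≤ (N⁻¹)^2 * (N * ((4*p) * (n:ℝ)^2)) := by
          exact mul_le_mul_of_nonneg_left hv (by positivity)
      _ = N⁻¹ * ((4*p) * (n:ℝ)^2) := by
          field_simp
  have hsubB : {ω | ε/3 ≤ |N⁻¹ * G ω - mtr ρ n|}
      ⊆ {ω | (ε/3)^2 ≤ (N⁻¹ * G ω - mtr ρ n)^2} := by
    intro ω hω
    rw [Set.mem_setOf_eq] at hω ⊢
    calc (ε/3)^2 ≤ |N⁻¹ * G ω - mtr ρ n|^2 := pow_le_pow_left₀ (by linarith) hω 2
      _ = (N⁻¹ * G ω - mtr ρ n)^2 := sq_abs _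
  have hBm : μ {ω | ε/3 ≤ |N⁻¹ * G ω - mtr ρ n|} ≤ ENNReal.ofReal (d/2) := by
    refine (measure_mono hsubB).trans
      ((markov_meas μ hQi (fun ω => sq_nonneg _) (by positivity)).trans
        (ENNReal.ofReal_le_ofReal ?_))
    calc (∫ ω, (N⁻¹ * G ω - mtr ρ n)^2 ∂μ) / (ε/3)^2
        ≤ (N⁻¹ * ((4*p) * (n:ℝ)^2)) / (ε/3)^2 := by gcongr
      _ ≤ d/2 := le_of_lt hBp
  -- assembling
  have hsubMain : {x | ε ≤ dist (N⁻¹ * F x) m}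
      ⊆ {ω | ε/3 ≤ D ω} ∪ {ω | ε/3 ≤ |N⁻¹ * G ω - mtr ρ n|} := by
    intro ω hω
    rw [Set.mem_setOf_eq, Real.dist_eq] at hω
    rw [Set.mem_union, Set.mem_setOf_eq, Set.mem_setOf_eq]
    by_contra hcon
    push_neg at hcon
    obtain ⟨hA', hB'⟩ := hcon
    have e1 : N⁻¹ * F ω - m = D ω + (N⁻¹ * G ω - mtr ρ n) + (mtr ρ n - m) := by
      rw [hD]; ring
    have e2 : |N⁻¹ * F ω - m| ≤ |D ω| + |N⁻¹ * G ω - mtr ρ n| + |mtr ρ n - m| := by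
      rw [e1]; exact abs_add_three _ _ _
    rw [abs_of_nonneg (hD0 ω)] at e2
    have e3 : |mtr ρ n - m| < ε/3 := by
      rw [abs_sub_comm, abs_of_nonneg (by linarith)]; linarith
    linarith
  have hgoal : {x | ε ≤ dist (N⁻¹ * ∑ u ∈ Finset.range p, ∑ v ∈ Finset.Ioo u p,
      rexp (-ρ * Z u x * Z v x)) m} = {x | ε ≤ dist (N⁻¹ * F x) m} := by
    ext x
    rw [Set.mem_setOf_eq, Set.mem_setOf_eq, hsum x]
  calc μ {x | ε ≤ dist (N⁻¹ * ∑ u ∈ Finset.range p, ∑ v ∈ Finset.Ioo u p,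
          rexp (-ρ * Z u x * Z v x)) m}
      = μ {x | ε ≤ dist (N⁻¹ * F x) m} := by rw [hgoal]
    _ ≤ μ ({ω | ε/3 ≤ D ω} ∪ {ω | ε/3 ≤ |N⁻¹ * G ω - mtr ρ n|}) := measure_mono hsubMain
    _ ≤ μ {ω | ε/3 ≤ D ω} + μ {ω | ε/3 ≤ |N⁻¹ * G ω - mtr ρ n|} := measure_union_le _ _
    _ ≤ ENNReal.ofReal (d/2) + ENNReal.ofReal (d/2) := add_le_add hA hBm
    _ = ENNReal.ofReal d := by
        rw [← ENNReal.ofReal_add (by positivity) (by positivity)]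
        norm_num
    _ ≤ δ := hdδ
end

section
/- Fix |ρ| < 1 and p ≥ 2, and let f₁ = (p choose 2)⁻¹ Σ_{1 ≤ u < v ≤ p} f_{uv} be the uniform mixture of the densities f_{uv} of the Gaussian measures N(0, M_p(u,v,ρ)⁻¹), and let f₀ be the standard p-variate Gaussian density. Then for all x ∈ ℝᵖ, f₁(x)/f₀(x) = √(1−ρ²) · (p choose 2)⁻¹ · Σ_{1 ≤ u < v ≤ p} exp(−ρ x_u x_v). -/
open MeasureTheory

/-- The `p × p` real matrix whose diagonal entries are `1`, whose `(u,v)` and `(v,u)`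
entries are `ρ`, and whose remaining entries are `0`. -/
def Mmat (p : ℕ) (u v : Fin p) (ρ : ℝ) : Matrix (Fin p) (Fin p) ℝ :=
  fun i j => if i = j then 1 else if (i = u ∧ j = v) ∨ (i = v ∧ j = u) then ρ else 0

/-- The Lebesgue density of the centered `p`-variate Gaussian measure with covariance
matrix `S`. -/
noncomputable def gaussianDensity (p : ℕ) (S : Matrix (Fin p) (Fin p) ℝ)
    (x : Fin p → ℝ) : ℝ :=
  (Real.sqrt ((2 * Real.pi) ^ p * S.det))⁻¹ *
    Real.exp (-(1 / 2) * dotProduct x (Matrix.mulVec S⁻¹ x))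

/-- The uniform mixture over pairs `u < v` of the Gaussian densities with covariance
`(M_p(u,v,ρ))⁻¹`. -/
noncomputable def mixtureDensity (p : ℕ) (ρ : ℝ) (x : Fin p → ℝ) : ℝ :=
  ((p.choose 2 : ℝ))⁻¹ *
    ∑ q ∈ Finset.univ.filter (fun q : Fin p × Fin p => q.1 < q.2),
      gaussianDensity p (Mmat p q.1 q.2 ρ)⁻¹ x

open Matrix

lemma std_apply' {p : ℕ} (a b i j : Fin p) (c : ℝ) :
    Matrix.single a b c i j = if i = a ∧ j = b then c else 0 := by
  simp [Matrix.single, Matrix.of_apply, eq_comm]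

lemma Mmat_eq' (p : ℕ) (u v : Fin p) (huv : u ≠ v) (ρ : ℝ) :
    Mmat p u v ρ = 1 + Matrix.single u v ρ + Matrix.single v u ρ := by
  ext i j
  simp only [Mmat, Matrix.add_apply, one_apply, std_apply']
  by_cases h1 : i = j
  · subst h1
    have h2 : ¬(i = u ∧ i = v) := fun ⟨ha, hb⟩ => huv (ha ▸ hb)
    have h3 : ¬(i = v ∧ i = u) := fun ⟨ha, hb⟩ => huv (hb ▸ ha)
    simp [h2, h3]
  · rw [if_neg h1]
    by_cases h2 : i = u ∧ j = v
    · have h3 : ¬(i = v ∧ j = u) := fun ⟨ha, _⟩ => huv (h2.1 ▸ ha)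
      simp [h2, h3, huv, Ne.symm huv]
    · by_cases h3 : i = v ∧ j = u
      · simp [h2, h3, huv, Ne.symm huv]
      · have h4 : ¬((i = u ∧ j = v) ∨ (i = v ∧ j = u)) := by tauto
        simp [h1, h2, h3, h4]

lemma diag_eq' (p : ℕ) (v : Fin p) (ρ : ℝ) :
    Matrix.diagonal (fun i : Fin p => if i = v then 1 - ρ^2 else 1)
      = 1 - Matrix.single v v (ρ^2) := by
  ext i j
  simp only [diagonal_apply, Matrix.sub_apply, one_apply, std_apply']
  by_cases h1 : i = j
  · subst h1
    by_cases h2 : i = v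
    · subst h2; simp
    · simp [h2]
  · have h2 : ¬(i = v ∧ j = v) := fun ⟨ha, hb⟩ => h1 (ha.trans hb.symm)
    simp [h1, h2]

lemma Mmat_factor' (p : ℕ) (u v : Fin p) (huv : u ≠ v) (ρ : ℝ) :
    Mmat p u v ρ =
      (1 + Matrix.single v u ρ) *
        (Matrix.diagonal (fun i => if i = v then 1 - ρ^2 else 1)) *
        (1 + Matrix.single u v ρ) := by
  rw [Mmat_eq' p u v huv, diag_eq']
  have h1 : Matrix.single v u ρ * Matrix.single v v (ρ^2) = 0 :=
    Matrix.single_mul_single_of_ne _ _ _ _ huv _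
  have h2 : Matrix.single v v (ρ^2) * Matrix.single u v ρ = 0 :=
    Matrix.single_mul_single_of_ne _ _ _ _ (Ne.symm huv) _
  have h3 : Matrix.single v u ρ * Matrix.single u v ρ = Matrix.single v v (ρ*ρ) :=
    Matrix.single_mul_single_same _ _ _ _ _
  have hr : ρ * ρ = ρ^2 := by ring
  rw [hr] at h3
  simp only [mul_add, add_mul, sub_mul, mul_sub, Matrix.one_mul, Matrix.mul_one,
    h1, h2, h3, Matrix.zero_mul, Matrix.mul_zero, sub_zero, zero_sub, zero_mul, mul_zero]
  abel

lemma det_Mmat' (p : ℕ) (u v : Fin p) (huv : u < v) (ρ : ℝ) :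
    (Mmat p u v ρ).det = 1 - ρ^2 := by
  rw [Mmat_factor' p u v huv.ne ρ, Matrix.det_mul, Matrix.det_mul]
  have hdiag : ∀ (a b : Fin p) (c : ℝ) (i : Fin p), a ≠ b →
      (1 + Matrix.single a b c) i i = 1 := by
    intro a b c i hab
    simp only [Matrix.add_apply, one_apply_eq, std_apply']
    rw [if_neg (fun ⟨ha, hb⟩ => hab (ha ▸ hb ▸ rfl)), add_zero]
  have hL : (1 + Matrix.single v u ρ).det = 1 := by
    rw [Matrix.det_of_lowerTriangular]
    · exact Finset.prod_eq_one fun i _ => hdiag v u ρ i huv.ne'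
    · intro i j hij
      have hij' : i < j := hij
      simp only [Matrix.add_apply, one_apply, std_apply']
      rw [if_neg hij'.ne, if_neg (fun ⟨ha, hb⟩ => absurd (ha ▸ hb ▸ hij') (asymm huv)),
        add_zero]
  have hU : (1 + Matrix.single u v ρ).det = 1 := by
    rw [Matrix.det_of_upperTriangular]
    · exact Finset.prod_eq_one fun i _ => hdiag u v ρ i huv.ne
    · intro i j hij
      have hij' : j < i := hij
      simp only [Matrix.add_apply, one_apply, std_apply']
      rw [if_neg hij'.ne', if_neg (fun ⟨ha, hb⟩ => absurd (ha ▸ hb ▸ hij') (asymm huv)),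
        add_zero]
  rw [hL, hU, Matrix.det_diagonal, one_mul, mul_one]
  rw [Finset.prod_ite_eq' Finset.univ v _]
  simp

lemma quad_std' {p : ℕ} (a b : Fin p) (c : ℝ) (x : Fin p → ℝ) :
    x ⬝ᵥ (Matrix.single a b c).mulVec x = c * x a * x b := by
  simp [dotProduct, mulVec, std_apply', ite_and, Finset.mul_sum, mul_ite, ite_mul,
    Finset.sum_ite_eq, Finset.sum_ite_eq']
  ring

lemma quad_Mmat' (p : ℕ) (u v : Fin p) (huv : u ≠ v) (ρ : ℝ) (x : Fin p → ℝ) :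
    x ⬝ᵥ (Mmat p u v ρ).mulVec x = x ⬝ᵥ x + 2 * (ρ * x u * x v) := by
  rw [Mmat_eq' p u v huv, add_mulVec, add_mulVec, one_mulVec, dotProduct_add,
    dotProduct_add, quad_std', quad_std']
  ring

lemma density_pair' (p : ℕ) (u v : Fin p) (huv : u < v) (ρ : ℝ) (hρ : |ρ| < 1)
    (x : Fin p → ℝ) :
    gaussianDensity p (Mmat p u v ρ)⁻¹ x
      = Real.sqrt (1 - ρ^2) * Real.exp (-ρ * x u * x v) * gaussianDensity p 1 x := by
  have hpos : (0:ℝ) < 1 - ρ^2 := by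
    have := (sq_lt_one_iff_abs_lt_one (a := ρ)).2 hρ
    linarith
  have hdet := det_Mmat' p u v huv ρ
  have hunit : IsUnit (Mmat p u v ρ).det := by
    rw [hdet]; exact isUnit_iff_ne_zero.2 (ne_of_gt hpos)
  have hinvinv : ((Mmat p u v ρ)⁻¹)⁻¹ = Mmat p u v ρ :=
    Matrix.nonsing_inv_nonsing_inv _ hunit
  have hdetinv : ((Mmat p u v ρ)⁻¹).det = (1 - ρ^2)⁻¹ := by
    rw [Matrix.det_nonsing_inv, hdet, Ring.inverse_eq_inv]
  have h2pi : (0:ℝ) < (2 * Real.pi) ^ p :=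
    pow_pos (by positivity) p
  rw [gaussianDensity, gaussianDensity, hinvinv, hdetinv,
    quad_Mmat' p u v huv.ne ρ x, inv_one, Matrix.one_mulVec, Matrix.det_one, mul_one]
  have hsqrt : (Real.sqrt ((2 * Real.pi) ^ p * (1 - ρ^2)⁻¹))⁻¹
      = Real.sqrt (1 - ρ^2) * (Real.sqrt ((2 * Real.pi) ^ p))⁻¹ := by
    rw [Real.sqrt_mul h2pi.le, Real.sqrt_inv, mul_inv, inv_inv, mul_comm]
  rw [hsqrt]
  have hexp : Real.exp (-(1/2) * (x ⬝ᵥ x + 2 * (ρ * x u * x v)))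
      = Real.exp (-ρ * x u * x v) * Real.exp (-(1/2) * (x ⬝ᵥ x)) := by
    rw [← Real.exp_add]; ring_nf
  rw [hexp]; ring

theorem likelihood_ratio_of_mixture (p : ℕ) (hp : 2 ≤ p) (ρ : ℝ) (hρ : |ρ| < 1)
    (x : Fin p → ℝ) :
    mixtureDensity p ρ x / gaussianDensity p 1 x =
      Real.sqrt (1 - ρ ^ 2) * ((p.choose 2 : ℝ))⁻¹ *
        ∑ q ∈ Finset.univ.filter (fun q : Fin p × Fin p => q.1 < q.2),
          Real.exp (-ρ * x q.1 * x q.2) := by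
  have hc : gaussianDensity p 1 x ≠ 0 := by
    have h1 : (0:ℝ) < Real.sqrt ((2 * Real.pi) ^ p * (1 : Matrix (Fin p) (Fin p) ℝ).det) := by
      rw [Matrix.det_one, mul_one]
      have : (0:ℝ) < (2 * Real.pi) ^ p := pow_pos (by positivity) p
      exact Real.sqrt_pos.2 this
    have : (0:ℝ) < gaussianDensity p 1 x := by
      rw [gaussianDensity]
      exact mul_pos (inv_pos.2 h1) (Real.exp_pos _)
    exact ne_of_gt this
  rw [mixtureDensity]
  have hsum : ∑ q ∈ Finset.univ.filter (fun q : Fin p × Fin p => q.1 < q.2),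
      gaussianDensity p (Mmat p q.1 q.2 ρ)⁻¹ x
      = (∑ q ∈ Finset.univ.filter (fun q : Fin p × Fin p => q.1 < q.2),
          Real.sqrt (1 - ρ^2) * Real.exp (-ρ * x q.1 * x q.2)) * gaussianDensity p 1 x := by
    rw [Finset.sum_mul]
    refine Finset.sum_congr rfl fun q hq => ?_
    have hlt : q.1 < q.2 := (Finset.mem_filter.1 hq).2
    rw [density_pair' p q.1 q.2 hlt ρ hρ x]
  rw [hsum, ← mul_assoc, mul_div_assoc, div_self hc, mul_one, ← Finset.mul_sum,
    ← mul_assoc, mul_comm ((p.choose 2 : ℝ))⁻¹ (Real.sqrt (1 - ρ^2))]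
end
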